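/- For every integer n ≥ 1 and every k with 1 ≤ k ≤ n+1, the determinant of the n×n matrix E_n^k(3,1), obtained by deleting the k-th row of E_n(3,1), equals (-1)^{k-1}·k·(n+2)·(n−k+2)/2; in particular det E_n^k(3,1) ≠ 0 for all 1 ≤ k ≤ n+1, i.e. all order-n minors of E_n(3,1) are nonzero. -/
import Mathlib


/-- The `(n+1) × n` matrix `E_n(a,b)` (rows indexed by `Fin (n+1)`, columns by `Fin n`). -/
def Emat (n : ℕ) (a b : ℝ) : Matrix (Fin (n + 1)) (Fin n) ℝ :=
  Matrix.of fun i j =>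
    if (i : ℕ) = (j : ℕ) then -a
    else if (i : ℕ) + 1 = (j : ℕ) then b
    else if (i : ℕ) = (j : ℕ) + 1 then a
    else if (i : ℕ) = (j : ℕ) + 2 then -b
    else 0

/-- `E_n^k(a,b)`: the `n × n` matrix obtained from `E_n(a,b)` by deleting the
`k`-th row (rows of `E_n(a,b)` being counted `1,…,n+1`). -/
def Ek (n : ℕ) (a b : ℝ) (k : ℕ) : Matrix (Fin n) (Fin n) ℝ :=
  Matrix.of fun i j =>
    Emat n a b (if (i : ℕ) + 1 < k then i.castSucc else i.succ) j

open Matrix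

/-- band pattern -/
def band (i j : ℕ) : ℝ :=
  if i = j then 3 else if j = i + 1 then -3 else if j = i + 2 then 1
  else if i = j + 1 then -1 else 0

def Dmat (m : ℕ) : Matrix (Fin m) (Fin m) ℝ := Matrix.of fun i j => band i j

def Mmat (m : ℕ) : Matrix (Fin m) (Fin m) ℝ :=
  Matrix.of fun i j =>
    if (i : ℕ) = 0 then (if (j : ℕ) = 0 then -3 else if (j : ℕ) = 1 then 1 else 0)
    else band i j

def Wmat (m : ℕ) : Matrix (Fin m) (Fin m) ℝ :=
  Matrix.of fun i j =>
    if (j : ℕ) = 0 then (if (i : ℕ) = 0 then -1 else 0) else band i j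

lemma val_succAbove {N : ℕ} (p : Fin (N + 1)) (i : Fin N) :
    ((p.succAbove i : Fin (N + 1)) : ℕ) = if (i : ℕ) < (p : ℕ) then (i : ℕ) else (i : ℕ) + 1 := by
  unfold Fin.succAbove
  split_ifs with h h' h' <;> simp_all [Fin.lt_def]

lemma det_expand_col0 {m : ℕ} (A : Matrix (Fin (m + 2)) (Fin (m + 2)) ℝ)
    (h : ∀ i : Fin (m + 2), 2 ≤ (i : ℕ) → A i 0 = 0) :
    A.det = A 0 0 * (A.submatrix Fin.succ Fin.succ).det
      - A 1 0 * (A.submatrix ((1 : Fin (m + 2)).succAbove) Fin.succ).det := by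
  rw [Matrix.det_succ_column_zero, Fin.sum_univ_succ, Fin.sum_univ_succ]
  have hz : ∀ i : Fin m,
      (-1 : ℝ) ^ (((i.succ.succ : Fin (m + 2))) : ℕ) * A i.succ.succ 0 *
        (A.submatrix (Fin.succAbove i.succ.succ) Fin.succ).det = 0 := by
    intro i
    rw [h _ (by simp [Fin.val_succ])]
    ring
  rw [Finset.sum_eq_zero fun i _ => hz i]
  simp [Fin.succAbove_zero, Fin.succ_zero_eq_one]
  ring

lemma det_expand_row0 {m : ℕ} (A : Matrix (Fin (m + 2)) (Fin (m + 2)) ℝ)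
    (h : ∀ j : Fin (m + 2), 2 ≤ (j : ℕ) → A 0 j = 0) :
    A.det = A 0 0 * (A.submatrix Fin.succ Fin.succ).det
      - A 0 1 * (A.submatrix Fin.succ ((1 : Fin (m + 2)).succAbove)).det := by
  rw [Matrix.det_succ_row_zero, Fin.sum_univ_succ, Fin.sum_univ_succ]
  have hz : ∀ j : Fin m,
      (-1 : ℝ) ^ (((j.succ.succ : Fin (m + 2))) : ℕ) * A 0 j.succ.succ *
        (A.submatrix Fin.succ (Fin.succAbove j.succ.succ)).det = 0 := by
    intro j
    rw [h _ (by simp [Fin.val_succ])]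
    ring
  rw [Finset.sum_eq_zero fun j _ => hz j]
  simp [Fin.succAbove_zero, Fin.succ_zero_eq_one]
  ring

lemma det_expand_col0_single {m : ℕ} (A : Matrix (Fin (m + 1)) (Fin (m + 1)) ℝ)
    (h : ∀ i : Fin (m + 1), 1 ≤ (i : ℕ) → A i 0 = 0) :
    A.det = A 0 0 * (A.submatrix Fin.succ Fin.succ).det := by
  rw [Matrix.det_succ_column_zero, Fin.sum_univ_succ]
  have hz : ∀ i : Fin m,
      (-1 : ℝ) ^ (((i.succ : Fin (m + 1))) : ℕ) * A i.succ 0 *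
        (A.submatrix (Fin.succAbove i.succ) Fin.succ).det = 0 := by
    intro i
    rw [h _ (by simp [Fin.val_succ])]
    ring
  rw [Finset.sum_eq_zero fun i _ => hz i]
  simp [Fin.succAbove_zero]

lemma band_shift (i j : ℕ) : band (i + 1) (j + 1) = band i j := by
  unfold band
  split_ifs <;> first | rfl | omega | exact (False.elim (by assumption))

lemma I1 (m : ℕ) : (Dmat (m + 2)).submatrix Fin.succ Fin.succ = Dmat (m + 1) := by
  ext i j
  simp only [Matrix.submatrix_apply, Dmat, Matrix.of_apply, Fin.val_succ]
  exact band_shift _ _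

lemma I2 (m : ℕ) :
    (Dmat (m + 2)).submatrix ((1 : Fin (m + 2)).succAbove) Fin.succ = Mmat (m + 1) := by
  ext i j
  simp only [Matrix.submatrix_apply, Dmat, Mmat, Matrix.of_apply, Fin.val_succ]
  have hv := val_succAbove (1 : Fin (m + 2)) i
  by_cases hi : (i : ℕ) = 0
  · rw [show ((1 : Fin (m + 2)) : ℕ) = 1 from rfl] at hv
    rw [hi] at hv ⊢
    simp only [if_pos (by norm_num : (0:ℕ) < 1)] at hv
    rw [show (((1 : Fin (m+2)).succAbove i) : ℕ) = 0 from hv, if_pos rfl]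
    unfold band
    split_ifs <;> first | rfl | omega | exact (False.elim (by assumption))
  · rw [show ((1 : Fin (m + 2)) : ℕ) = 1 from rfl] at hv
    rw [if_neg (show ¬ ((i : ℕ) < 1) by omega)] at hv
    rw [hv, if_neg hi]
    exact band_shift _ _

lemma I3 (m : ℕ) : (Mmat (m + 2)).submatrix Fin.succ Fin.succ = Dmat (m + 1) := by
  ext i j
  simp only [Matrix.submatrix_apply, Dmat, Mmat, Matrix.of_apply, Fin.val_succ]
  rw [if_neg (show ¬ ((i : ℕ) + 1 = 0) by omega)]
  exact band_shift _ _

lemma I4 (m : ℕ) :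
    (Mmat (m + 2)).submatrix Fin.succ ((1 : Fin (m + 2)).succAbove) = Wmat (m + 1) := by
  ext i j
  simp only [Matrix.submatrix_apply, Mmat, Wmat, Matrix.of_apply, Fin.val_succ]
  rw [if_neg (by omega : ¬ ((i : ℕ) + 1 = 0))]
  have hv := val_succAbove (1 : Fin (m + 2)) j
  rw [show ((1 : Fin (m + 2)) : ℕ) = 1 from rfl] at hv
  by_cases hj : (j : ℕ) = 0
  · rw [hj] at hv ⊢
    simp only [if_pos (by norm_num : (0:ℕ) < 1)] at hv
    rw [show (((1 : Fin (m+2)).succAbove j) : ℕ) = 0 from hv, if_pos rfl]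
    unfold band
    split_ifs <;> first | rfl | omega | exact (False.elim (by assumption))
  · rw [if_neg (show ¬ ((j : ℕ) < 1) by omega)] at hv
    rw [hv, if_neg hj]
    exact band_shift _ _

lemma I5 (m : ℕ) : (Wmat (m + 1)).submatrix Fin.succ Fin.succ = Dmat m := by
  ext i j
  simp only [Matrix.submatrix_apply, Dmat, Wmat, Matrix.of_apply, Fin.val_succ]
  rw [if_neg (by omega : ¬ ((j : ℕ) + 1 = 0))]
  exact band_shift _ _

lemma R1 (m : ℕ) :
    (Dmat (m + 2)).det = 3 * (Dmat (m + 1)).det + (Mmat (m + 1)).det := by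
  rw [det_expand_col0 (Dmat (m + 2)) (by
    intro i hi
    simp only [Dmat, Matrix.of_apply, Fin.val_zero]
    unfold band
    split_ifs <;> first | rfl | omega | exact (False.elim (by assumption)))]
  rw [I1, I2]
  have h00 : Dmat (m + 2) 0 0 = 3 := by
    simp only [Dmat, Matrix.of_apply, Fin.val_zero]
    unfold band; rw [if_pos rfl]
  have h10 : Dmat (m + 2) 1 0 = -1 := by
    simp only [Dmat, Matrix.of_apply, Fin.val_zero, Fin.val_one]
    unfold band
    rw [if_neg (by omega : ¬ (1 = 0)), if_neg (by omega : ¬ (0 = 1 + 1)),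
      if_neg (by omega : ¬ (0 = 1 + 2)), if_pos rfl]
  rw [h00, h10]
  ring

lemma R2 (m : ℕ) :
    (Mmat (m + 2)).det = -3 * (Dmat (m + 1)).det - (Wmat (m + 1)).det := by
  rw [det_expand_row0 (Mmat (m + 2)) (by
    intro j hj
    simp only [Mmat, Matrix.of_apply, Fin.val_zero]
    rw [if_pos trivial, if_neg (show ¬ ((j:ℕ) = 0) by omega),
      if_neg (show ¬ ((j:ℕ) = 1) by omega)])]
  rw [I3, I4]
  have h00 : Mmat (m + 2) 0 0 = -3 := by
    simp only [Mmat, Matrix.of_apply, Fin.val_zero]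
    norm_num
  have h01 : Mmat (m + 2) 0 1 = 1 := by
    simp only [Mmat, Matrix.of_apply, Fin.val_zero, Fin.val_one]
    norm_num
  rw [h00, h01]
  ring

lemma R3 (m : ℕ) : (Wmat (m + 1)).det = -(Dmat m).det := by
  rw [det_expand_col0_single (Wmat (m + 1)) (by
    intro i hi
    simp only [Wmat, Matrix.of_apply, Fin.val_zero]
    rw [if_pos trivial, if_neg (show ¬ ((i:ℕ) = 0) by omega)])]
  rw [I5]
  have h00 : Wmat (m + 1) 0 0 = -1 := by
    simp only [Wmat, Matrix.of_apply, Fin.val_zero]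
    norm_num
  rw [h00]
  ring

lemma detD : ∀ m : ℕ, (Dmat m).det = ((m : ℝ) + 1) * ((m : ℝ) + 2) / 2 := by
  intro m
  induction m using Nat.strong_induction_on with
  | _ m IH =>
    match m with
    | 0 => norm_num [Matrix.det_fin_zero]
    | 1 =>
      rw [Matrix.det_fin_one]
      show band 0 0 = _
      unfold band
      norm_num
    | 2 =>
      rw [Matrix.det_fin_two]
      show band 0 0 * band 1 1 - band 0 1 * band 1 0 = _
      unfold band
      norm_num
    | (q + 3) =>
      have e1 : (Dmat (q + 3)).det = 3 * (Dmat (q + 2)).det + (Mmat (q + 2)).det := R1 (q + 1)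
      have e2 : (Mmat (q + 2)).det = -3 * (Dmat (q + 1)).det - (Wmat (q + 1)).det := R2 q
      have e3 : (Wmat (q + 1)).det = -(Dmat q).det := R3 q
      rw [e1, e2, e3, IH (q+2) (by omega), IH (q+1) (by omega), IH q (by omega)]
      push_cast
      ring

lemma detM : ∀ m : ℕ, 1 ≤ m → (Mmat m).det = -((m : ℝ) * ((m : ℝ) + 2)) := by
  intro m hm
  match m with
  | 1 =>
    rw [Matrix.det_fin_one]
    show (if (0:ℕ) = 0 then (if (0:ℕ) = 0 then (-3:ℝ) else if (0:ℕ) = 1 then 1 else 0) else band 0 0) = _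
    norm_num
  | (s + 2) =>
    rw [R2 s, R3 s, detD (s + 1), detD s]
    push_cast
    ring

/-- the determinant of `Emat` with row `i` deleted -/
def Dd (n : ℕ) (i : Fin (n + 1)) : ℝ := ((Emat n 3 1).submatrix i.succAbove id).det

lemma rel (n : ℕ) (j : Fin n) :
    ∑ i : Fin (n + 1), (-1 : ℝ) ^ (i : ℕ) * Emat n 3 1 i j * Dd n i = 0 := by
  classical
  set E := Emat n 3 1 with hE
  set F : Matrix (Fin (n + 1)) (Fin (n + 1)) ℝ :=
    Matrix.of (fun i => Fin.snoc (fun j' => E i j') (E i j)) with hF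
  have hcol : ∀ i, F i (Fin.castSucc j) = F i (Fin.last n) := by
    intro i
    simp only [hF, Matrix.of_apply, Fin.snoc_castSucc, Fin.snoc_last]
  have hne : Fin.castSucc j ≠ Fin.last n := Fin.ne_of_lt (Fin.castSucc_lt_last j)
  have h0 : F.det = 0 := Matrix.det_zero_of_column_eq hne hcol
  have hexp := Matrix.det_succ_column F (Fin.last n)
  rw [h0] at hexp
  have hsub : ∀ i : Fin (n + 1),
      F.submatrix i.succAbove (Fin.last n).succAbove = E.submatrix i.succAbove id := by
    intro i
    ext a b
    simp only [Matrix.submatrix_apply, Fin.succAbove_last, hF, Matrix.of_apply,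
      Fin.snoc_castSucc, id_eq]
  have hterm : ∀ i : Fin (n + 1),
      (-1 : ℝ) ^ ((i : ℕ) + ((Fin.last n : Fin (n+1)) : ℕ)) * F i (Fin.last n) *
        (F.submatrix i.succAbove (Fin.last n).succAbove).det
      = (-1 : ℝ) ^ n * ((-1 : ℝ) ^ (i : ℕ) * E i j * Dd n i) := by
    intro i
    rw [hsub i]
    have hFl : F i (Fin.last n) = E i j := by
      simp only [hF, Matrix.of_apply, Fin.snoc_last]
    rw [hFl, Fin.val_last, pow_add]
    show _ = (-1 : ℝ) ^ n * ((-1 : ℝ) ^ (i : ℕ) * E i j * (E.submatrix i.succAbove id).det)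
    ring
  rw [Finset.sum_congr rfl (fun i _ => hterm i), ← Finset.mul_sum] at hexp
  have := hexp.symm
  rcases mul_eq_zero.mp this with h | h
  · exact absurd h (pow_ne_zero _ (by norm_num))
  · exact h

lemma sum_three {N : ℕ} (F : Fin N → ℝ) (a b c : Fin N)
    (hab : a ≠ b) (hac : a ≠ c) (hbc : b ≠ c)
    (h0 : ∀ x, x ≠ a → x ≠ b → x ≠ c → F x = 0) :
    ∑ x, F x = F a + F b + F c := by
  classical
  rw [← Finset.sum_subset (Finset.subset_univ ({a, b, c} : Finset (Fin N)))
    (by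
      intro x _ hx
      simp only [Finset.mem_insert, Finset.mem_singleton, not_or] at hx
      exact h0 x hx.1 hx.2.1 hx.2.2)]
  rw [Finset.sum_insert (by simp [hab, hac]), Finset.sum_insert (by simp [hbc]),
    Finset.sum_singleton]
  ring

lemma sum_four {N : ℕ} (F : Fin N → ℝ) (a b c d : Fin N)
    (hab : a ≠ b) (hac : a ≠ c) (had : a ≠ d) (hbc : b ≠ c) (hbd : b ≠ d) (hcd : c ≠ d)
    (h0 : ∀ x, x ≠ a → x ≠ b → x ≠ c → x ≠ d → F x = 0) :
    ∑ x, F x = F a + F b + F c + F d := by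
  classical
  rw [← Finset.sum_subset (Finset.subset_univ ({a, b, c, d} : Finset (Fin N)))
    (by
      intro x _ hx
      simp only [Finset.mem_insert, Finset.mem_singleton, not_or] at hx
      exact h0 x hx.1 hx.2.1 hx.2.2.1 hx.2.2.2)]
  rw [Finset.sum_insert (by simp [hab, hac, had]), Finset.sum_insert (by simp [hbc, hbd]),
    Finset.sum_insert (by simp [hcd]), Finset.sum_singleton]
  ring

lemma J1 (n : ℕ) (h : (0 : ℕ) < n + 1) :
    (Emat n 3 1).submatrix (Fin.succAbove ⟨0, h⟩) id = Dmat n := by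
  ext i j
  have hv := val_succAbove (⟨0, h⟩ : Fin (n + 1)) i
  simp only [show ((⟨0, h⟩ : Fin (n + 1)) : ℕ) = 0 from rfl] at hv
  rw [if_neg (show ¬ ((i : ℕ) < 0) by omega)] at hv
  show Emat n 3 1 _ j = _
  simp only [Emat, Dmat, Matrix.of_apply, hv]
  unfold band
  split_ifs <;> first | rfl | omega | exact (False.elim (by assumption)) | norm_num

lemma J2 (n : ℕ) (h : (1 : ℕ) < n + 1) :
    (Emat n 3 1).submatrix (Fin.succAbove ⟨1, h⟩) id = Mmat n := by
  ext i j
  have hv := val_succAbove (⟨1, h⟩ : Fin (n + 1)) i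
  simp only [show ((⟨1, h⟩ : Fin (n + 1)) : ℕ) = 1 from rfl] at hv
  show Emat n 3 1 _ j = _
  by_cases hi : (i : ℕ) = 0
  · rw [if_pos (show (i : ℕ) < 1 by omega)] at hv
    simp only [Emat, Mmat, Matrix.of_apply, hv, hi, if_pos rfl]
    split_ifs <;> first | rfl | omega | exact (False.elim (by assumption)) | norm_num
  · rw [if_neg (show ¬ ((i : ℕ) < 1) by omega)] at hv
    simp only [Emat, Mmat, Matrix.of_apply, hv, if_neg hi]
    unfold band
    split_ifs <;> first | rfl | omega | exact (False.elim (by assumption)) | norm_num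

lemma fin_ne {N : ℕ} {a b : ℕ} (ha : a < N) (hb : b < N) (hne : a ≠ b) :
    (⟨a, ha⟩ : Fin N) ≠ ⟨b, hb⟩ := by
  simp [Fin.ext_iff]; omega

lemma val_ne_of_ne {N : ℕ} {x : Fin N} {a : ℕ} (ha : a < N) (h : x ≠ ⟨a, ha⟩) :
    (x : ℕ) ≠ a := fun hh => h (Fin.ext hh)

lemma key (n : ℕ) : ∀ p : ℕ, p ≤ n → ∀ h : p < n + 1,
    Dd n ⟨p, h⟩ =
      (-1 : ℝ) ^ p * (((p : ℝ) + 1) * ((n : ℝ) + 2) * ((n : ℝ) + 1 - (p : ℝ)) / 2) := by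
  intro p
  induction p using Nat.strong_induction_on with
  | _ p IH =>
    intro hpn h
    rcases p with _ | p
    · -- p = 0
      show ((Emat n 3 1).submatrix (Fin.succAbove ⟨0, h⟩) id).det = _
      rw [J1 n h, detD n]
      push_cast
      ring
    rcases p with _ | p
    · -- p = 1
      show ((Emat n 3 1).submatrix (Fin.succAbove ⟨1, h⟩) id).det = _
      rw [J2 n h, detM n (by omega)]
      push_cast
      ring
    rcases p with _ | q
    · -- p = 2
      have h0 : (0 : ℕ) < n + 1 := by omega
      have h1 : (1 : ℕ) < n + 1 := by omega
      have h2 : (2 : ℕ) < n + 1 := by omega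
      have hj : (0 : ℕ) < n := by omega
      have hrel := rel n ⟨0, hj⟩
      rw [sum_three _ ⟨0, h0⟩ ⟨1, h1⟩ ⟨2, h2⟩ (fin_ne h0 h1 (by omega))
        (fin_ne h0 h2 (by omega)) (fin_ne h1 h2 (by omega))
        (by
          intro x hx0 hx1 hx2
          have e0 := val_ne_of_ne h0 hx0
          have e1 := val_ne_of_ne h1 hx1
          have e2 := val_ne_of_ne h2 hx2
          have hE : Emat n 3 1 x ⟨0, hj⟩ = 0 := by
            simp only [Emat, Matrix.of_apply, show ((⟨0, hj⟩ : Fin n) : ℕ) = 0 from rfl]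
            rw [if_neg (by omega), if_neg (by omega), if_neg (by omega), if_neg (by omega)]
          rw [hE]
          ring)] at hrel
      have ha : Emat n 3 1 ⟨0, h0⟩ ⟨0, hj⟩ = -3 := by
        simp only [Emat, Matrix.of_apply, show ((⟨0, hj⟩ : Fin n) : ℕ) = 0 from rfl,
          show ((⟨0, h0⟩ : Fin (n+1)) : ℕ) = 0 from rfl]
        norm_num
      have hb : Emat n 3 1 ⟨1, h1⟩ ⟨0, hj⟩ = 3 := by
        simp only [Emat, Matrix.of_apply, show ((⟨0, hj⟩ : Fin n) : ℕ) = 0 from rfl,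
          show ((⟨1, h1⟩ : Fin (n+1)) : ℕ) = 1 from rfl]
        norm_num
      have hc : Emat n 3 1 ⟨2, h2⟩ ⟨0, hj⟩ = -1 := by
        simp only [Emat, Matrix.of_apply, show ((⟨0, hj⟩ : Fin n) : ℕ) = 0 from rfl,
          show ((⟨2, h2⟩ : Fin (n+1)) : ℕ) = 2 from rfl]
        norm_num
      rw [ha, hb, hc, IH 0 (by omega) (by omega) h0, IH 1 (by omega) (by omega) h1] at hrel
      simp only [show ((⟨0, h0⟩ : Fin (n+1)) : ℕ) = 0 from rfl,
        show ((⟨1, h1⟩ : Fin (n+1)) : ℕ) = 1 from rfl,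
        show ((⟨2, h2⟩ : Fin (n+1)) : ℕ) = 2 from rfl] at hrel
      have hcc : Dd n ⟨2, h2⟩ = Dd n ⟨2, h⟩ := rfl
      rw [hcc] at hrel
      norm_num at hrel ⊢
      linarith [hrel]
    · -- p = q + 3
      have hq0 : q < n + 1 := by omega
      have hq1 : q + 1 < n + 1 := by omega
      have hq2 : q + 2 < n + 1 := by omega
      have hq3 : q + 3 < n + 1 := by omega
      have hj : q + 1 < n := by omega
      have hrel := rel n ⟨q + 1, hj⟩
      rw [sum_four _ ⟨q, hq0⟩ ⟨q+1, hq1⟩ ⟨q+2, hq2⟩ ⟨q+3, hq3⟩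
        (fin_ne hq0 hq1 (by omega)) (fin_ne hq0 hq2 (by omega)) (fin_ne hq0 hq3 (by omega))
        (fin_ne hq1 hq2 (by omega)) (fin_ne hq1 hq3 (by omega)) (fin_ne hq2 hq3 (by omega))
        (by
          intro x hx0 hx1 hx2 hx3
          have e0 := val_ne_of_ne hq0 hx0
          have e1 := val_ne_of_ne hq1 hx1
          have e2 := val_ne_of_ne hq2 hx2
          have e3 := val_ne_of_ne hq3 hx3
          have hE : Emat n 3 1 x ⟨q + 1, hj⟩ = 0 := by
            simp only [Emat, Matrix.of_apply, show ((⟨q+1, hj⟩ : Fin n) : ℕ) = q+1 from rfl]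
            rw [if_neg (by omega), if_neg (by omega), if_neg (by omega), if_neg (by omega)]
          rw [hE]
          ring)] at hrel
      have ha : Emat n 3 1 ⟨q, hq0⟩ ⟨q+1, hj⟩ = 1 := by
        simp only [Emat, Matrix.of_apply, show ((⟨q+1, hj⟩ : Fin n) : ℕ) = q+1 from rfl,
          show ((⟨q, hq0⟩ : Fin (n+1)) : ℕ) = q from rfl]
        split_ifs <;> first | rfl | omega | exact (False.elim (by assumption)) | exact absurd trivial (by assumption)
      have hb : Emat n 3 1 ⟨q+1, hq1⟩ ⟨q+1, hj⟩ = -3 := by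
        simp only [Emat, Matrix.of_apply, show ((⟨q+1, hj⟩ : Fin n) : ℕ) = q+1 from rfl,
          show ((⟨q+1, hq1⟩ : Fin (n+1)) : ℕ) = q+1 from rfl]
        split_ifs <;> first | rfl | omega | exact (False.elim (by assumption)) | exact absurd trivial (by assumption)
      have hc : Emat n 3 1 ⟨q+2, hq2⟩ ⟨q+1, hj⟩ = 3 := by
        simp only [Emat, Matrix.of_apply, show ((⟨q+1, hj⟩ : Fin n) : ℕ) = q+1 from rfl,
          show ((⟨q+2, hq2⟩ : Fin (n+1)) : ℕ) = q+2 from rfl]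
        split_ifs <;> first | rfl | omega | exact (False.elim (by assumption)) | exact absurd trivial (by assumption)
      have hd : Emat n 3 1 ⟨q+3, hq3⟩ ⟨q+1, hj⟩ = -1 := by
        simp only [Emat, Matrix.of_apply, show ((⟨q+1, hj⟩ : Fin n) : ℕ) = q+1 from rfl,
          show ((⟨q+3, hq3⟩ : Fin (n+1)) : ℕ) = q+3 from rfl]
        split_ifs <;> first | rfl | omega | exact (False.elim (by assumption)) | exact absurd trivial (by assumption)
      rw [ha, hb, hc, hd, IH q (by omega) (by omega) hq0,
        IH (q+1) (by omega) (by omega) hq1, IH (q+2) (by omega) (by omega) hq2] at hrel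
      simp only [show ((⟨q, hq0⟩ : Fin (n+1)) : ℕ) = q from rfl,
        show ((⟨q+1, hq1⟩ : Fin (n+1)) : ℕ) = q+1 from rfl,
        show ((⟨q+2, hq2⟩ : Fin (n+1)) : ℕ) = q+2 from rfl,
        show ((⟨q+3, hq3⟩ : Fin (n+1)) : ℕ) = q+3 from rfl] at hrel
      have hcc : Dd n ⟨q+3, hq3⟩ = Dd n ⟨q+3, h⟩ := rfl
      rw [hcc] at hrel
      simp only [pow_succ] at hrel ⊢
      rcases Nat.even_or_odd q with hpar | hpar
      · rw [Even.neg_one_pow hpar] at hrel ⊢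
        push_cast at hrel ⊢
        linarith [hrel]
      · rw [Odd.neg_one_pow hpar] at hrel ⊢
        push_cast at hrel ⊢
        linarith [hrel]

lemma EkEq (n k : ℕ) (hk1 : 1 ≤ k) (hk2 : k ≤ n + 1) :
    Ek n 3 1 k = (Emat n 3 1).submatrix (Fin.succAbove ⟨k - 1, by omega⟩) id := by
  ext i j
  show Emat n 3 1 (if (i : ℕ) + 1 < k then i.castSucc else i.succ) j
      = Emat n 3 1 ((⟨k - 1, by omega⟩ : Fin (n+1)).succAbove i) j
  congr 1
  unfold Fin.succAbove
  have : (Fin.castSucc i < (⟨k - 1, by omega⟩ : Fin (n+1))) ↔ ((i : ℕ) + 1 < k) := by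
    rw [Fin.lt_def]
    show ((i : ℕ) < k - 1) ↔ _
    omega
  by_cases hc : (i : ℕ) + 1 < k
  · rw [if_pos hc, if_pos (this.mpr hc)]
  · rw [if_neg hc, if_neg (fun hh => hc (this.mp hh))]

theorem stmt6 (n : ℕ) (hn : 1 ≤ n) (k : ℕ) (hk1 : 1 ≤ k) (hk2 : k ≤ n + 1) :
    (Ek n 3 1 k).det =
        (-1 : ℝ) ^ (k - 1) * (k : ℝ) * ((n : ℝ) + 2) * ((n : ℝ) - (k : ℝ) + 2) / 2 ∧
      (Ek n 3 1 k).det ≠ 0 := by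
  have hlt : k - 1 < n + 1 := by omega
  have hkey := key n (k - 1) (by omega) hlt
  have hEk : (Ek n 3 1 k).det = Dd n ⟨k - 1, hlt⟩ := by
    rw [EkEq n k hk1 hk2]
    rfl
  have hcast : ((k - 1 : ℕ) : ℝ) = (k : ℝ) - 1 := by
    have : (1 : ℕ) ≤ k := hk1
    push_cast [this]
    ring
  have hval : (Ek n 3 1 k).det =
      (-1 : ℝ) ^ (k - 1) * (k : ℝ) * ((n : ℝ) + 2) * ((n : ℝ) - (k : ℝ) + 2) / 2 := by
    rw [hEk, hkey, hcast]
    ring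
  refine ⟨hval, ?_⟩
  rw [hval]
  have h1 : (0 : ℝ) < (k : ℝ) := by exact_mod_cast hk1
  have h2 : (0 : ℝ) < (n : ℝ) + 2 := by positivity
  have h3 : (0 : ℝ) < (n : ℝ) - (k : ℝ) + 2 := by
    have : (k : ℝ) ≤ (n : ℝ) + 1 := by exact_mod_cast hk2
    linarith
  have h4 : (-1 : ℝ) ^ (k - 1) ≠ 0 := pow_ne_zero _ (by norm_num)
  intro hcontra
  have hnum := (div_eq_zero_iff.mp hcontra).resolve_right (by norm_num)
  rcases mul_eq_zero.mp hnum with hh | hh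
  · rcases mul_eq_zero.mp hh with hh2 | hh2
    · rcases mul_eq_zero.mp hh2 with hh3 | hh3
      · exact h4 hh3
      · linarith
    · linarith
  · linarith
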